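/- There exist binary random variables X, U with X not independent of U (hence I(X;U) > 0) but with GL(X → U) = 0; specifically, taking X|{U=u_i} ~ Bernoulli(i/(i+3)) for i = 1,2 and U uniform on {u_1, u_2}, one has I(X;U) > 0 and GL(X → U) = 0. -/
import Mathlib


noncomputable def HG {n : ℕ} (p : Fin n → ℝ) : ℝ :=
  Finset.univ.inf' Finset.univ_nonempty
    (fun r : Equiv.Perm (Fin n) => ∑ i, (((r i : ℕ) : ℝ) + 1) * p i)

/-- `X | {U = u_i} ~ Bernoulli(i/(i+3))` for `i = 1, 2`:
`p_{X|U=u₁} = (3/4, 1/4)`, `p_{X|U=u₂} = (3/5, 2/5)`. -/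
noncomputable def pXgU : Fin 2 → Fin 2 → ℝ := ![![3 / 4, 1 / 4], ![3 / 5, 2 / 5]]

/-- Marginal of `X`, with `U` uniform on two values. -/
noncomputable def pX : Fin 2 → ℝ := fun x => ∑ u : Fin 2, (1 / 2) * pXgU u x

lemma aux_log (a b : ℝ) (ha : 0 < a) (hb : 0 < b) (hne : a ≠ b) :
    a - b < a * Real.log (a / b) := by
  have h1 : b / a ≠ 1 := by
    intro h
    apply hne
    field_simp at h
    exact h.symm
  have h := Real.log_lt_sub_one_of_pos (div_pos hb ha) h1
  have h2 : Real.log (a / b) = - Real.log (b / a) := by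
    rw [← Real.log_inv]
    congr 1
    field_simp
  rw [h2]
  have : a * Real.log (b / a) < a * (b / a - 1) := by
    exact (mul_lt_mul_iff_right₀ ha).2 h
  have hba : a * (b / a) = b := by field_simp
  nlinarith

lemma HG_two (p : Fin 2 → ℝ) : HG p = min (p 0 + 2 * p 1) (2 * p 0 + p 1) := by
  unfold HG
  apply le_antisymm
  · apply le_min
    · refine le_trans (Finset.inf'_le _ (Finset.mem_univ (Equiv.refl (Fin 2)))) ?_
      simp [Fin.sum_univ_two]
      ring_nf
      norm_num
    · refine le_trans (Finset.inf'_le _ (Finset.mem_univ (Equiv.swap 0 1))) ?_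
      simp [Fin.sum_univ_two, Equiv.swap_apply_left, Equiv.swap_apply_right]
      ring_nf
      norm_num
  · apply Finset.le_inf'
    intro r _
    have hne : r 0 ≠ r 1 := r.injective.ne (by decide)
    have h0 : r 0 = 0 ∨ r 0 = 1 := by omega
    rcases h0 with h0 | h0
    · have h1 : r 1 = 1 := by omega
      rw [Fin.sum_univ_two, h0, h1]
      norm_num
    · have h1 : r 1 = 0 := by omega
      rw [Fin.sum_univ_two, h0, h1]
      norm_num

/-- `I(X;U) > 0` (X and U are dependent) yet `GL(X → U) = 0`. -/
theorem mutual_info_pos_guessing_leakage_zero :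
    0 < ∑ u : Fin 2, ∑ x : Fin 2,
        (1 / 2) * pXgU u x *
          Real.log ((1 / 2 * pXgU u x) / (1 / 2 * pX x)) ∧
    HG pX - ∑ u : Fin 2, (1 / 2) * HG (pXgU u) = 0 := by
  have hpX0 : pX 0 = 27 / 40 := by norm_num [pX, pXgU, Fin.sum_univ_two]
  have hpX1 : pX 1 = 13 / 40 := by norm_num [pX, pXgU, Fin.sum_univ_two]
  constructor
  · have k1 : (3/8 : ℝ) - 27/80 < 3/8 * Real.log ((3/8)/(27/80)) :=
      aux_log _ _ (by norm_num) (by norm_num) (by norm_num)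
    have k2 : (1/8 : ℝ) - 13/80 < 1/8 * Real.log ((1/8)/(13/80)) :=
      aux_log _ _ (by norm_num) (by norm_num) (by norm_num)
    have k3 : (3/10 : ℝ) - 27/80 < 3/10 * Real.log ((3/10)/(27/80)) :=
      aux_log _ _ (by norm_num) (by norm_num) (by norm_num)
    have k4 : (1/5 : ℝ) - 13/80 < 1/5 * Real.log ((1/5)/(13/80)) :=
      aux_log _ _ (by norm_num) (by norm_num) (by norm_num)
    simp only [Fin.sum_univ_two, hpX0, hpX1]
    norm_num [pXgU]
    nlinarith [k1, k2, k3, k4]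
  · simp only [Fin.sum_univ_two, HG_two]
    rw [hpX0, hpX1]
    norm_num [pXgU]
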